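/- Let k be a field of characteristic zero and L a Lie algebra over k. For each p ≥ 0 the convolution power e^{⋆p}/p! of the Eulerian idempotent, as a linear map U(L) → U(L), is zero on U_q(L) for every q ≠ p and is the identity on U_p(L). -/

import Mathlib

/-!
STATEMENT 1: For each p ≥ 0 the convolution power e^{⋆p}/p! of the Eulerian
idempotent, as a linear map U(L) → U(L), is zero on U_q(L) for every q ≠ p and is
the identity on U_p(L).
-/


open TensorProduct

attribute [local instance 100] LieRing.ofAssociativeRing

noncomputable section

namespace Stmt1

variable (k : Type*) [Field k] [CharZero k]
variable (L : Type*) [LieRing L] [LieAlgebra k L]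

abbrev U := UniversalEnvelopingAlgebra k L

/-- the canonical embedding `L → U(L)` as a linear map -/
def ιU : L →ₗ[k] U k L := (UniversalEnvelopingAlgebra.ι k).toLinearMap

/-- `ℓ ↦ ℓ ⊗ 1 + 1 ⊗ ℓ` as a morphism of Lie algebras into `U(L) ⊗ U(L)`. -/
def comulGen : L →ₗ⁅k⁆ (U k L ⊗[k] U k L) where
  toFun l := (ιU k L l) ⊗ₜ 1 + 1 ⊗ₜ (ιU k L l)
  map_add' x y := by
    simp [TensorProduct.add_tmul, TensorProduct.tmul_add]; abel
  map_smul' c x := by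
    simp [TensorProduct.smul_tmul', TensorProduct.tmul_smul, smul_add]
  map_lie' := by
    intro x y
    simp only [ιU, Ring.lie_def, LieHom.coe_toLinearMap, LieHom.map_lie]
    simp only [mul_add, add_mul, Algebra.TensorProduct.tmul_mul_tmul, mul_one, one_mul,
      TensorProduct.sub_tmul, TensorProduct.tmul_sub]
    abel

/-- The coproduct of the Hopf algebra `U(L)`, determined by
`Δ(ℓ) = 1 ⊗ ℓ + ℓ ⊗ 1` for `ℓ ∈ L`. -/
def comul : U k L →ₐ[k] (U k L ⊗[k] U k L) :=
  UniversalEnvelopingAlgebra.lift k (comulGen k L)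

/-- The counit of the Hopf algebra `U(L)`. -/
def counit : U k L →ₐ[k] k :=
  UniversalEnvelopingAlgebra.lift k (0 : L →ₗ⁅k⁆ k)

/-- The convolution product on linear endomorphisms of `U(L)`:
`f ⋆ g = μ ∘ (f ⊗ g) ∘ Δ`. -/
def conv (f g : U k L →ₗ[k] U k L) : U k L →ₗ[k] U k L :=
  (LinearMap.mul' k (U k L)) ∘ₗ (TensorProduct.map f g) ∘ₗ (comul k L).toLinearMap

/-- `η ∘ ε`, the unit for the convolution product. -/
def unitCounit : U k L →ₗ[k] U k L :=
  (Algebra.linearMap k (U k L)) ∘ₗ (counit k L).toLinearMap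

/-- Convolution powers `f^{⋆ n}` (with `f^{⋆0} = η ∘ ε`). -/
def convPow (f : U k L →ₗ[k] U k L) : ℕ → (U k L →ₗ[k] U k L)
  | 0 => unitCounit k L
  | n + 1 => conv k L f (convPow f n)

/-- `J = 𝟏 - η ∘ ε`. -/
def J : U k L →ₗ[k] U k L := LinearMap.id - unitCounit k L

/-- The property of being the Eulerian idempotent
`e = log⋆(𝟏) = J - J^{⋆2}/2 + J^{⋆3}/3 - ⋯`: on each element the series is
eventually constant (since `J` is locally conilpotent) and `e` is its value. -/
def IsEulerianIdempotent (e : U k L →ₗ[k] U k L) : Prop :=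
  ∀ x : U k L, ∃ N : ℕ, ∀ M ≥ N,
    e x = ∑ n ∈ Finset.Icc 1 M, ((-1 : k) ^ (n + 1) * (n : k)⁻¹) • (convPow k L (J k L) n) x

/-- The symmetrized product `(l₁, …, lₙ) = (1/n!) Σ_{σ ∈ Sₙ} l_{σ(1)} ⋯ l_{σ(n)}`
in `U(L)`. -/
def symProd {n : ℕ} (l : Fin n → L) : U k L :=
  ((n.factorial : k)⁻¹) • ∑ σ : Equiv.Perm (Fin n), (List.ofFn fun i => ιU k L (l (σ i))).prod

/-- `Uₙ(L)`, the subspace of `U(L)` spanned by the symmetrized products of `n`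
elements of `L`. -/
def Usub (n : ℕ) : Submodule k (U k L) :=
  Submodule.span k {x : U k L | ∃ l : Fin n → L, x = symProd k L l}


/-! ### Auxiliary development -/

section Scalar
open Finset
set_option linter.unusedSectionVars false

noncomputable def cc (n q : ℕ) : k :=
  ∑ i ∈ range (n+1), (-1:k)^(n+i) * (n.choose i) * (i:k)^q

theorem cc_zero (q : ℕ) : cc k 0 q = if q = 0 then 1 else 0 := by
  simp [cc]
  rcases q with _|q <;> simp

theorem cc_shift (n q : ℕ) :
    ∑ m ∈ range (n+1), (-1:k)^(n+m) * (n.choose m) * ((m:k)+1)^q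
      = cc k (n+1) q + cc k n q := by
  have hA : cc k (n+1) q
      = ∑ i ∈ range (n+1), (-1:k)^(n+1+(i+1)) * ((n+1).choose (i+1)) * ((i:k)+1)^q
        + (-1:k)^(n+1) * ((0:ℕ):k)^q := by
    rw [cc, Finset.sum_range_succ']
    push_cast
    norm_num
  have hB : cc k n q
      = ∑ i ∈ range (n+1), (-1:k)^(n+(i+1)) * (n.choose (i+1)) * ((i:k)+1)^q
        + (-1:k)^n * ((0:ℕ):k)^q := by
    rw [cc, Finset.sum_range_succ', Finset.sum_range_succ, Nat.choose_succ_self]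
    push_cast
    norm_num
  rw [hA, hB]
  have h0 : (-1:k)^(n+1) * ((0:ℕ):k)^q + (-1:k)^n * ((0:ℕ):k)^q = 0 := by
    rw [pow_succ]; ring
  rw [add_add_add_comm, h0, add_zero, ← Finset.sum_add_distrib]
  refine Finset.sum_congr rfl fun i _ => ?_
  rw [Nat.choose_succ_succ]
  push_cast
  ring

theorem cc_nrec (n q : ℕ) :
    ∑ j ∈ range (q+1), (q.choose j : k) * (if j = 0 then (0:k) else 1) * cc k n (q - j)
      = cc k (n+1) q := by
  have key : ∑ j ∈ range (q+1), (q.choose j : k) * cc k n (q-j)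
      = ∑ i ∈ range (n+1), (-1:k)^(n+i) * (n.choose i) * ((i:k)+1)^q := by
    simp only [cc, Finset.mul_sum]
    rw [Finset.sum_comm]
    refine Finset.sum_congr rfl fun i _ => ?_
    have hb : ((i:k)+1)^q = ∑ j ∈ range (q+1), (1:k)^j * (i:k)^(q-j) * (q.choose j) := by
      rw [add_comm ((i:k)) 1, add_pow]
    rw [hb, Finset.mul_sum]
    exact Finset.sum_congr rfl fun j _ => by push_cast; ring
  have hsplit : ∀ j ∈ range (q+1),
      (q.choose j : k) * (if j = 0 then (0:k) else 1) * cc k n (q - j)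
        = (q.choose j : k) * cc k n (q-j) - (if j = 0 then cc k n q else 0) := by
    intro j _
    rcases eq_or_ne j 0 with rfl | hj
    · simp
    · simp [hj]
  rw [Finset.sum_congr rfl hsplit, Finset.sum_sub_distrib, key,
    Finset.sum_ite_eq' (range (q+1)) 0 (fun _ => cc k n q)]
  simp only [Finset.mem_range, Nat.succ_pos, if_pos, Nat.zero_lt_succ]
  rw [cc_shift]
  ring

theorem cc_qrec (n q : ℕ) :
    cc k (n+1) (q+1) = (n+1) * (cc k (n+1) q + cc k n q) := by
  rw [← cc_shift, cc, Finset.sum_range_succ', Finset.mul_sum]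
  have h0 : (-1:k)^(n+1+0) * (((n+1).choose 0 : ℕ):k) * ((0:ℕ):k)^(q+1) = 0 := by
    norm_num
  rw [h0, add_zero]
  refine Finset.sum_congr rfl fun i _ => ?_
  have hc : (n+1) * n.choose i = (n+1).choose (i+1) * (i+1) := Nat.add_one_mul_choose_eq n i
  have hck : ((n:k)+1) * (n.choose i : k) = ((n+1).choose (i+1) : k) * ((i:k)+1) := by
    exact_mod_cast hc
  push_cast
  linear_combination (-((-1:k)^(n+i) * ((i:k)+1)^q)) * hck

theorem cc_vanish : ∀ q n : ℕ, q < n → cc k n q = 0 := by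
  intro q
  induction q with
  | zero =>
    intro n hn
    have hz := Int.alternating_sum_range_choose (n := n)
    have hzk : ∑ i ∈ range (n+1), (-1:k)^i * (n.choose i) = if n = 0 then 1 else 0 := by
      have := congrArg (Int.cast : ℤ → k) hz
      push_cast [apply_ite (Int.cast : ℤ → k)] at this
      exact this
    have : cc k n 0 = (-1:k)^n * ∑ i ∈ range (n+1), (-1:k)^i * (n.choose i) := by
      rw [cc, Finset.mul_sum]
      refine Finset.sum_congr rfl fun i _ => ?_
      rw [pow_add]; ring
    rw [this, hzk, if_neg (by omega : n ≠ 0)]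
    ring
  | succ q ih =>
    intro n hn
    obtain ⟨m, rfl⟩ : ∃ m, n = m + 1 := ⟨n - 1, by omega⟩
    rw [cc_qrec, ih m.succ (by omega), ih m (by omega)]
    ring

theorem T_eq (q M : ℕ) (hM : q ≤ M) :
    ∑ n ∈ Finset.Icc 1 M, (-1:k)^(n+1) * (n:k)⁻¹ * cc k n q
      = if q = 1 then 1 else 0 := by
  have hsub : ∑ n ∈ Finset.Icc 1 M, (-1:k)^(n+1) * (n:k)⁻¹ * cc k n q
      = ∑ n ∈ Finset.Icc 1 q, (-1:k)^(n+1) * (n:k)⁻¹ * cc k n q := by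
    refine (Finset.sum_subset (Finset.Icc_subset_Icc_right hM) ?_).symm
    intro n hn hn'
    simp only [Finset.mem_Icc] at hn hn'
    rw [cc_vanish k q n (by omega)]
    ring
  rw [hsub]
  rcases q with _ | q
  · simp
  · rw [← Finset.Ico_add_one_right_eq_Icc, Finset.sum_Ico_eq_sum_range]
    simp only [Nat.succ_sub_one, Nat.succ_eq_add_one, Nat.add_sub_cancel]
    have hterm : ∀ i ∈ range (q+1),
        (-1:k)^(1+i+1) * ((1+i : ℕ):k)⁻¹ * cc k (1+i) (q+1)
          = (-1:k)^i * cc k (i+1) q + (-1:k)^i * cc k i q := by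
      intro i _
      rw [show 1 + i = i + 1 from by omega, cc_qrec]
      have hne : ((i:k)+1) ≠ 0 := by
        have : ((i+1 : ℕ):k) ≠ 0 := Nat.cast_ne_zero.mpr (Nat.succ_ne_zero i)
        push_cast at this; exact this
      push_cast
      field_simp
      ring
    rw [Finset.sum_congr rfl hterm, Finset.sum_add_distrib]
    rw [Finset.sum_range_succ (fun i => (-1:k)^i * cc k (i+1) q),
      Finset.sum_range_succ' (fun i => (-1:k)^i * cc k i q)]
    rw [cc_vanish k q (q+1) (by omega)]
    have hcancel : ∑ i ∈ range q, (-1:k)^i * cc k (i+1) q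
        + ∑ i ∈ range q, (-1:k)^(i+1) * cc k (i+1) q = 0 := by
      rw [← Finset.sum_add_distrib]
      refine Finset.sum_eq_zero fun i _ => ?_
      rw [pow_succ]; ring
    rw [cc_zero]
    rcases q with _ | q
    · simp
    · simp only [Nat.succ_ne_zero, if_false]
      calc ∑ i ∈ range (q+1), (-1:k)^i * cc k (i+1) (q+1) + (-1:k)^(q+1) * 0 +
            (∑ i ∈ range (q+1), (-1:k)^(i+1) * cc k (i+1) (q+1) + (-1:k)^0 * 0)
          = ∑ i ∈ range (q+1), (-1:k)^i * cc k (i+1) (q+1)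
            + ∑ i ∈ range (q+1), (-1:k)^(i+1) * cc k (i+1) (q+1) := by ring
        _ = 0 := by
            rw [← Finset.sum_add_distrib]
            refine Finset.sum_eq_zero fun i _ => ?_
            rw [pow_succ]; ring

/-- coefficient of `e^{⋆p}` on degree `q` -/
theorem bb_step (p q : ℕ) :
    ∑ j ∈ range (q+1), (q.choose j : k) * (if j = 1 then (1:k) else 0)
        * (if q - j = p then ((p.factorial : ℕ):k) else 0)
      = if q = p+1 then (((p+1).factorial : ℕ):k) else 0 := by
  rcases q with _ | q
  · simp
  · rw [Finset.sum_eq_single 1]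
    · simp only [Nat.choose_one_right, if_pos rfl, Nat.succ_sub_one]
      rcases eq_or_ne q p with rfl | hq
      · rw [if_pos rfl, if_pos rfl, Nat.factorial_succ]
        push_cast
        ring
      · rw [if_neg hq, if_neg (show ¬ (q + 1 = p + 1) by omega)]
        ring
    · intro j _ hj
      rw [if_neg hj]
      ring
    · intro h
      exact absurd (Finset.mem_range.mpr (by omega)) h

end Scalar

section Hopf
open Finset

theorem counit_ι (l : L) : counit k L (ιU k L l) = 0 := by
  have := UniversalEnvelopingAlgebra.lift_ι_apply k (0 : L →ₗ⁅k⁆ k) l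
  simpa [counit, ιU] using this

theorem comul_ι (l : L) :
    comul k L (ιU k L l) = (ιU k L l) ⊗ₜ[k] 1 + 1 ⊗ₜ[k] (ιU k L l) := by
  have := UniversalEnvelopingAlgebra.lift_ι_apply k (comulGen k L) l
  simpa [comul, comulGen, ιU] using this

theorem counit_pow (l : L) (q : ℕ) :
    counit k L (ιU k L l ^ q) = if q = 0 then 1 else 0 := by
  rw [map_pow, counit_ι]
  rcases q with _ | q <;> simp

theorem unitCounit_pow (l : L) (q : ℕ) :
    unitCounit k L (ιU k L l ^ q) = if q = 0 then 1 else 0 := by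
  rw [unitCounit, LinearMap.comp_apply, AlgHom.toLinearMap_apply, counit_pow]
  rcases q with _ | q <;> simp

theorem J_pow (l : L) (q : ℕ) :
    J k L (ιU k L l ^ q) = (if q = 0 then (0:k) else 1) • ιU k L l ^ q := by
  rw [J, LinearMap.sub_apply, LinearMap.id_apply, unitCounit_pow]
  rcases q with _ | q <;> simp

theorem comul_pow (l : L) (q : ℕ) :
    comul k L (ιU k L l ^ q)
      = ∑ j ∈ range (q+1), (q.choose j) • ((ιU k L l ^ j) ⊗ₜ[k] (ιU k L l ^ (q-j))) := by
  rw [map_pow, comul_ι]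
  have hc : Commute ((ιU k L l) ⊗ₜ[k] (1 : U k L)) ((1 : U k L) ⊗ₜ[k] (ιU k L l)) := by
    simp [Commute, SemiconjBy, Algebra.TensorProduct.tmul_mul_tmul]
  rw [hc.add_pow]
  refine Finset.sum_congr rfl fun j hj => ?_
  rw [Algebra.TensorProduct.tmul_pow, Algebra.TensorProduct.tmul_pow, one_pow, one_pow,
    Algebra.TensorProduct.tmul_mul_tmul, mul_one, one_mul,
    ← (Nat.cast_commute (q.choose j) _).eq, ← nsmul_eq_mul]

theorem conv_apply_pow (f g : U k L →ₗ[k] U k L) (α β : ℕ → k) (l : L)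
    (hf : ∀ j, f (ιU k L l ^ j) = α j • ιU k L l ^ j)
    (hg : ∀ j, g (ιU k L l ^ j) = β j • ιU k L l ^ j) (q : ℕ) :
    conv k L f g (ιU k L l ^ q)
      = (∑ j ∈ range (q+1), (q.choose j : k) * α j * β (q - j)) • ιU k L l ^ q := by
  rw [conv, LinearMap.comp_apply, LinearMap.comp_apply, AlgHom.toLinearMap_apply,
    comul_pow, map_sum, map_sum, Finset.sum_smul]
  refine Finset.sum_congr rfl fun j hj => ?_
  have hjq : j ≤ q := Nat.lt_succ_iff.mp (Finset.mem_range.mp hj)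
  simp only [map_nsmul, TensorProduct.map_tmul, hf, hg, TensorProduct.tmul_smul,
    ← TensorProduct.smul_tmul', map_smul, smul_smul, LinearMap.mul'_apply,
    ← pow_add, Nat.add_sub_cancel' hjq, ← Nat.cast_smul_eq_nsmul k]
  congr 1
  ring

theorem convPow_J_pow (n : ℕ) (l : L) (q : ℕ) :
    convPow k L (J k L) n (ιU k L l ^ q) = cc k n q • ιU k L l ^ q := by
  induction n generalizing q with
  | zero =>
    show unitCounit k L _ = _
    rw [unitCounit_pow, cc_zero]
    rcases q with _ | q <;> simp
  | succ n ih =>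
    show conv k L (J k L) (convPow k L (J k L) n) _ = _
    rw [conv_apply_pow k L (J k L) (convPow k L (J k L) n)
      (fun j => if j = 0 then (0:k) else 1) (fun j => cc k n j) l
      (fun j => J_pow k L l j) (fun j => ih j) q, cc_nrec]

theorem e_apply_pow (e : U k L →ₗ[k] U k L) (he : IsEulerianIdempotent k L e)
    (l : L) (q : ℕ) :
    e (ιU k L l ^ q) = (if q = 1 then (1:k) else 0) • ιU k L l ^ q := by
  obtain ⟨N, hN⟩ := he (ιU k L l ^ q)
  rw [hN (max N q) (le_max_left _ _)]
  have hterm : ∀ n ∈ Finset.Icc 1 (max N q),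
      ((-1:k) ^ (n+1) * (n:k)⁻¹) • convPow k L (J k L) n (ιU k L l ^ q)
        = ((-1:k) ^ (n+1) * (n:k)⁻¹ * cc k n q) • ιU k L l ^ q := by
    intro n _
    rw [convPow_J_pow, smul_smul]
  rw [Finset.sum_congr rfl hterm, ← Finset.sum_smul,
    T_eq k q (max N q) (le_max_right _ _)]

theorem convPow_e_pow (e : U k L →ₗ[k] U k L) (he : IsEulerianIdempotent k L e)
    (p : ℕ) (l : L) (q : ℕ) :
    convPow k L e p (ιU k L l ^ q)
      = (if q = p then ((p.factorial : ℕ):k) else 0) • ιU k L l ^ q := by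
  induction p generalizing q with
  | zero =>
    show unitCounit k L _ = _
    rw [unitCounit_pow]
    rcases q with _ | q <;> simp
  | succ p ih =>
    show conv k L e (convPow k L e p) _ = _
    rw [conv_apply_pow k L e (convPow k L e p)
      (fun j => if j = 1 then (1:k) else 0)
      (fun j => if j = p then ((p.factorial : ℕ):k) else 0) l
      (fun j => e_apply_pow k L e he l j) (fun j => ih j) q, bb_step]

end Hopf

section Polar
open Finset

/-- expansion of a power of a sum in a (noncommutative) ring as a sum over words -/
theorem sum_pow_expand {R : Type*} [Ring R] {ι : Type*} [DecidableEq ι]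
    (x : ι → R) (S : Finset ι) :
    ∀ n : ℕ, (∑ i ∈ S, x i) ^ n
      = ∑ w ∈ Fintype.piFinset (fun _ : Fin n => S), (List.ofFn fun j => x (w j)).prod := by
  intro n
  induction n with
  | zero => simp
  | succ n ih =>
    have hstep : ∑ w ∈ Fintype.piFinset (fun _ : Fin (n+1) => S),
          (List.ofFn fun j => x (w j)).prod
        = ∑ p ∈ S ×ˢ Fintype.piFinset (fun _ : Fin n => S),
            x p.1 * (List.ofFn fun j => x (p.2 j)).prod := by
      refine Finset.sum_bij' (fun w _ => (w 0, Fin.tail w))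
        (fun p _ => Fin.cons p.1 p.2) ?_ ?_ ?_ ?_ ?_
      · intro w hw
        rw [Fintype.mem_piFinset] at hw
        rw [Finset.mem_product]
        exact ⟨hw 0, by rw [Fintype.mem_piFinset]; intro i; exact hw i.succ⟩
      · intro p hp
        rw [Finset.mem_product] at hp
        rw [Fintype.mem_piFinset]
        intro i
        induction i using Fin.cases with
        | zero => simpa using hp.1
        | succ j => simpa using Fintype.mem_piFinset.mp hp.2 j
      · intro w _
        exact Fin.cons_self_tail w
      · intro p _
        simp [Fin.tail_cons]
      · intro w _
        rw [List.ofFn_succ, List.prod_cons]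
        rfl
    rw [pow_succ', ih, Finset.sum_mul_sum, hstep, Finset.sum_product]

/-- the sign sum over supersets -/
theorem sign_sum {q : ℕ} (T : Finset (Fin q)) :
    ∑ S : Finset (Fin q), (if T ⊆ S then ((-1:ℤ))^(q + S.card) else 0)
      = if T = Finset.univ then 1 else 0 := by
  have hpar : ∀ V : Finset (Fin q), (-1:ℤ)^(q + Vᶜ.card) = (-1:ℤ)^V.card := by
    intro V
    have hle : V.card ≤ q := by
      simpa using Finset.card_le_card (Finset.subset_univ V)
    have hcc : Vᶜ.card = q - V.card := by
      simp [Finset.card_compl]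
    have h2 : q + Vᶜ.card + V.card = 2 * q := by omega
    have := pow_add ((-1:ℤ)) (q + Vᶜ.card) V.card
    rw [h2] at this
    have h4 : ((-1:ℤ))^(2*q) = 1 := by
      rw [pow_mul]; norm_num
    have h5 : (-1:ℤ)^(q + Vᶜ.card) * (-1:ℤ)^V.card = 1 := by rw [← this, h4]
    have h6 : ((-1:ℤ)^V.card) * ((-1:ℤ)^V.card) = 1 := by
      rw [← pow_add]
      apply Even.neg_one_pow
      exact ⟨V.card, rfl⟩
    calc (-1:ℤ)^(q + Vᶜ.card) = (-1:ℤ)^(q + Vᶜ.card) * ((-1:ℤ)^V.card * (-1:ℤ)^V.card) := by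
          rw [h6, mul_one]
      _ = ((-1:ℤ)^(q + Vᶜ.card) * (-1:ℤ)^V.card) * (-1:ℤ)^V.card := by ring
      _ = (-1:ℤ)^V.card := by rw [h5, one_mul]
  have hsubst : ∀ V : Finset (Fin q), T ⊆ Vᶜ ↔ V ⊆ Tᶜ := by
    intro V
    constructor
    · intro h x hx
      rw [Finset.mem_compl]
      intro hxT
      exact absurd hx (by simpa using h hxT)
    · intro h x hx
      rw [Finset.mem_compl]
      intro hxV
      exact absurd hx (by simpa using h hxV)
  calc ∑ S : Finset (Fin q), (if T ⊆ S then ((-1:ℤ))^(q + S.card) else 0)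
      = ∑ V : Finset (Fin q), (if T ⊆ Vᶜ then ((-1:ℤ))^(q + Vᶜ.card) else 0) := by
        exact (Equiv.sum_comp (⟨compl, compl, compl_compl, compl_compl⟩ :
          Finset (Fin q) ≃ Finset (Fin q))
          (fun S => if T ⊆ S then ((-1:ℤ))^(q + S.card) else 0)).symm
    _ = ∑ V : Finset (Fin q), (if V ⊆ Tᶜ then ((-1:ℤ))^V.card else 0) := by
        refine Finset.sum_congr rfl fun V _ => ?_
        rw [hpar]
        simp only [hsubst]
    _ = ∑ V ∈ Finset.univ.filter (fun V => V ⊆ Tᶜ), ((-1:ℤ))^V.card := by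
        rw [Finset.sum_filter]
    _ = ∑ V ∈ (Tᶜ).powerset, ((-1:ℤ))^V.card := by
        congr 1
        ext V
        simp [Finset.mem_powerset]
    _ = if T = Finset.univ then 1 else 0 := by
        rw [Finset.sum_powerset_neg_one_pow_card]
        congr 1
        simp only [eq_iff_iff]
        constructor
        · intro h
          rw [Finset.eq_univ_iff_forall]
          intro x
          by_contra hx
          exact absurd (h ▸ Finset.mem_compl.mpr hx) (Finset.notMem_empty x)
        · intro h
          subst h
          simp

theorem polarization {R : Type*} [Ring R] (q : ℕ) (x : Fin q → R) :
    ∑ σ : Equiv.Perm (Fin q), (List.ofFn fun i => x (σ i)).prod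
      = ∑ S : Finset (Fin q), (-1:ℤ)^(q + S.card) • (∑ i ∈ S, x i)^q := by
  have hcond : ∀ (S : Finset (Fin q)) (w : Fin q → Fin q),
      (w ∈ Fintype.piFinset (fun _ : Fin q => S)) ↔ Finset.image w Finset.univ ⊆ S := by
    intro S w
    rw [Fintype.mem_piFinset]
    constructor
    · intro h y hy
      obtain ⟨i, -, rfl⟩ := Finset.mem_image.mp hy
      exact h i
    · intro h i
      exact h (Finset.mem_image_of_mem w (Finset.mem_univ i))
  have step1 : ∑ S : Finset (Fin q), (-1:ℤ)^(q + S.card) • (∑ i ∈ S, x i)^q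
      = ∑ S : Finset (Fin q), ∑ w : Fin q → Fin q,
          (if Finset.image w Finset.univ ⊆ S then
            (-1:ℤ)^(q + S.card) • (List.ofFn fun j => x (w j)).prod else 0) := by
    refine Finset.sum_congr rfl fun S _ => ?_
    rw [sum_pow_expand, Finset.smul_sum]
    rw [show Fintype.piFinset (fun _ : Fin q => S)
        = Finset.univ.filter (fun w : Fin q → Fin q => Finset.image w Finset.univ ⊆ S) by
      ext w; simp only [Finset.mem_filter, Finset.mem_univ, true_and]; exact hcond S w]
    rw [Finset.sum_filter]
  rw [step1, Finset.sum_comm]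
  have step2 : ∀ w : Fin q → Fin q,
      ∑ S : Finset (Fin q), (if Finset.image w Finset.univ ⊆ S then
          (-1:ℤ)^(q + S.card) • (List.ofFn fun j => x (w j)).prod else 0)
        = (if Finset.image w Finset.univ = Finset.univ then (1:ℤ) else 0)
            • (List.ofFn fun j => x (w j)).prod := by
    intro w
    rw [← sign_sum (Finset.image w Finset.univ), Finset.sum_smul]
    refine Finset.sum_congr rfl fun S _ => ?_
    split_ifs with h
    · rfl
    · rw [zero_smul]
  have step3 : ∑ w : Fin q → Fin q,
      (if Finset.image w Finset.univ = Finset.univ then (1:ℤ) else 0)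
          • (List.ofFn fun j => x (w j)).prod
      = ∑ w ∈ Finset.univ.filter
          (fun w : Fin q → Fin q => Finset.image w Finset.univ = Finset.univ),
          (List.ofFn fun j => x (w j)).prod := by
    rw [Finset.sum_filter]
    refine Finset.sum_congr rfl fun w _ => ?_
    split_ifs with h
    · rw [one_smul]
    · rw [zero_smul]
  rw [Finset.sum_congr rfl (fun w _ => step2 w), step3]
  have hbij : ∀ w : Fin q → Fin q, Finset.image w Finset.univ = Finset.univ →
      Function.Bijective w := by
    intro w h
    apply Function.Surjective.bijective_of_finite
    intro y
    have : y ∈ Finset.image w Finset.univ := by rw [h]; exact Finset.mem_univ y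
    obtain ⟨i, -, hi⟩ := Finset.mem_image.mp this
    exact ⟨i, hi⟩
  refine Finset.sum_bij' (fun (σ : Equiv.Perm (Fin q)) (_ : σ ∈ Finset.univ) => ⇑σ)
    (fun w hw => Equiv.ofBijective w (hbij w (Finset.mem_filter.mp hw).2))
    ?_ (fun w _ => Finset.mem_univ _) ?_ ?_ ?_
  · intro σ _
    simp only [Finset.mem_filter, Finset.mem_univ, true_and]
    apply Finset.eq_univ_of_forall
    intro y
    exact Finset.mem_image.mpr ⟨σ.symm y, Finset.mem_univ _, σ.apply_symm_apply y⟩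
  · intro σ _
    exact Equiv.ext fun i => rfl
  · intro w _
    rfl
  · intro σ _
    rfl

end Polar

/-- `e^{⋆p}/p!` is zero on `U_q(L)` for `q ≠ p` and the identity on `U_p(L)`. -/
theorem convPow_eulerian_div_factorial_eq_proj
    (e : U k L →ₗ[k] U k L) (he : IsEulerianIdempotent k L e) (p : ℕ) :
    (∀ q : ℕ, q ≠ p → ∀ x ∈ Usub k L q, ((p.factorial : k)⁻¹) • (convPow k L e p) x = 0) ∧
    (∀ x ∈ Usub k L p, ((p.factorial : k)⁻¹) • (convPow k L e p) x = x) := by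
  have master : ∀ q : ℕ, ∀ x ∈ Usub k L q,
      convPow k L e p x = (if q = p then ((p.factorial : ℕ):k) else 0) • x := by
    intro q
    set c : k := if q = p then ((p.factorial : ℕ):k) else 0 with hc
    set G : U k L →ₗ[k] U k L := convPow k L e p - c • LinearMap.id with hG
    have hpow : ∀ m : L, (ιU k L m ^ q) ∈ LinearMap.ker G := by
      intro m
      rw [LinearMap.mem_ker, hG, LinearMap.sub_apply, LinearMap.smul_apply,
        LinearMap.id_apply, convPow_e_pow k L e he p m q, ← hc, sub_self]
    have hspanP : Submodule.span k {y : U k L | ∃ m : L, y = ιU k L m ^ q}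
        ≤ LinearMap.ker G := by
      rw [Submodule.span_le]
      rintro y ⟨m, rfl⟩
      exact hpow m
    have hsym : ∀ l : Fin q → L, symProd k L l ∈
        Submodule.span k {y : U k L | ∃ m : L, y = ιU k L m ^ q} := by
      intro l
      rw [symProd]
      refine Submodule.smul_mem _ _ ?_
      rw [polarization q (fun i => ιU k L (l i))]
      refine Submodule.sum_mem _ fun S _ => ?_
      refine zsmul_mem ?_ _
      refine Submodule.subset_span ⟨∑ i ∈ S, l i, ?_⟩
      rw [map_sum]
    have hUsub : Usub k L q ≤ LinearMap.ker G := by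
      rw [Usub, Submodule.span_le]
      rintro y ⟨l, rfl⟩
      exact hspanP (hsym l)
    intro x hx
    have hker := hUsub hx
    rw [LinearMap.mem_ker, hG, LinearMap.sub_apply, LinearMap.smul_apply,
      LinearMap.id_apply, sub_eq_zero] at hker
    exact hker
  have hfac : ((p.factorial : ℕ):k) ≠ 0 := Nat.cast_ne_zero.mpr p.factorial_ne_zero
  constructor
  · intro q hq x hx
    rw [master q x hx, if_neg hq, zero_smul, smul_zero]
  · intro x hx
    rw [master p x hx, if_pos rfl, smul_smul, inv_mul_cancel₀ hfac, one_smul]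

end Stmt1
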